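/- Small gain condition for n = 2 with mixed formulation: let γ₁₂, γ₂₁ ∈ K∞ and α ∈ K∞, and suppose for all r > 0: γ₁₂(γ₂₁((id+α)(r))) < r (where subsystem 1 uses the sum formulation and subsystem 2 the max formulation). Then the operator Γ∘D_α with Γ(s₁,s₂) = (γ₁₂(s₂), γ₂₁(s₁)) and D_α(s₁,s₂) = ((id+α)(s₁), s₂) satisfies Γ(D_α(s)) ≱ s for all s ∈ ℝ₊² \ {0}. -/

import Mathlib

open NNReal

/-- A function is of class K∞: continuous, strictly increasing, unbounded, and 0 at 0. -/
def KInf (f : ℝ≥0 → ℝ≥0) : Prop :=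
  Continuous f ∧ StrictMono f ∧ f 0 = 0 ∧ ∀ M : ℝ≥0, ∃ r, M < f r

/-- Mixed small gain condition for n = 2: if γ₁₂∘γ₂₁∘(id+α) < id on (0,∞), then
Γ∘D_α(s) ≱ s for all s ∈ ℝ₊² \ {0}, where Γ∘D_α(s₁,s₂) = (γ₁₂(s₂), γ₂₁((id+α)(s₁))). -/
theorem small_gain_n2_mixed (γ12 γ21 α : ℝ≥0 → ℝ≥0)
    (h12 : KInf γ12) (h21 : KInf γ21) (hα : KInf α)
    (hsg : ∀ r : ℝ≥0, 0 < r → γ12 (γ21 (r + α r)) < r) :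
    ∀ s : Fin 2 → ℝ≥0, s ≠ 0 →
      γ12 (s 1) < s 0 ∨ γ21 (s 0 + α (s 0)) < s 1 := by
  intro s hs
  rcases eq_or_lt_of_le (zero_le (a := s 0)) with h0 | h0
  · right
    have h1 : 0 < s 1 := by
      rcases eq_or_lt_of_le (zero_le (a := s 1)) with h1 | h1
      · exfalso; apply hs; funext i
        fin_cases i <;> simp [← h0, ← h1]
      · exact h1
    have : γ21 (s 0 + α (s 0)) = 0 := by
      rw [← h0, hα.2.2.1, add_zero, h21.2.2.1]
    rw [this]; exact h1
  · by_contra hc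
    push_neg at hc
    obtain ⟨hc1, hc2⟩ := hc
    have := hsg (s 0) h0
    have h2 : γ12 (s 1) ≤ γ12 (γ21 (s 0 + α (s 0))) := h12.2.1.monotone hc2
    exact absurd (lt_of_le_of_lt (le_trans hc1 h2) this) (lt_irrefl _)
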